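/- Let F = λ v^{⊗m} + E ∈ S^m(C^n) with v = (1, a_1, ..., a_{n−1}), λ ≠ 0, and ‖E‖ = ε. For j ∈ {1,...,n−1}, let a_j(ε) be the minimizer of the least squares problem min_w Σ_{i_2,...,i_m} |F_{1,i_2,...,i_m} w − F_{j+1,i_2,...,i_m}|². Then |a_j(ε) − a_j| = O(ε) as ε → 0, with the constant depending only on λ and v. -/

import Mathlib

/-- Let `F = λ v^{⊗m} + E` with `v = (1, a₁, …, a_{n−1})`, `λ ≠ 0` and `‖E‖ = ε`.
For each `j`, the minimizer `a_j(ε)` of the scalar least squares problem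
`min_w Σ |F_{1,i₂,…,i_m} w − F_{j+1,i₂,…,i_m}|²`, namely
`a_j(ε) = (a_j^* b_j)/(a_j^* a_j)`, satisfies `|a_j(ε) − a_j| = O(ε)` as `ε → 0`,
with the constant depending only on `λ` and `v`. -/
theorem stmt12 {n m : ℕ} (lam : ℂ) (hlam : lam ≠ 0)
    (a : Fin n → ℂ) (v : Fin (n + 1) → ℂ)
    (hv0 : v 0 = 1) (hva : ∀ j : Fin n, v j.succ = a j) :
    ∃ δ > (0 : ℝ), ∃ C > (0 : ℝ),
      ∀ (F E : (Fin (m + 1) → Fin (n + 1)) → ℂ) (ε : ℝ),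
        (∀ idx, F idx = lam * ∏ t, v (idx t) + E idx) →
        Real.sqrt (∑ idx, ‖E idx‖ ^ 2) = ε → ε ≤ δ →
        ∀ j : Fin n,
          ‖(∑ γ : Fin m → Fin (n + 1),
                (starRingEnd ℂ) (F (Fin.cons 0 γ)) * F (Fin.cons j.succ γ)) /
              ((∑ γ : Fin m → Fin (n + 1),
                ‖F (Fin.cons 0 γ)‖ ^ 2 : ℝ) : ℂ) - a j‖ ≤ C * ε := by
  classical
  set L : ℝ := ‖lam‖ with hLdef
  have hL0 : 0 < L := by
    rw [hLdef]; exact norm_pos_iff.mpr hlam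
  set P : ℝ := ∑ γ : Fin m → Fin (n + 1), ∏ t, ‖v (γ t)‖ with hPdef
  have hP0 : 0 ≤ P := by
    rw [hPdef]
    exact Finset.sum_nonneg fun γ _ => Finset.prod_nonneg fun t _ => norm_nonneg _
  set N : ℝ := (Fintype.card (Fin m → Fin (n + 1)) : ℝ) with hNdef
  have hN0 : 0 ≤ N := by rw [hNdef]; exact Nat.cast_nonneg _
  set B : ℝ := 1 + ∑ j : Fin n, ‖a j‖ with hBdef
  have hB0 : 0 < B := by
    rw [hBdef]
    have : 0 ≤ ∑ j : Fin n, ‖a j‖ :=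
      Finset.sum_nonneg fun j _ => norm_nonneg _
    linarith
  have hBj : ∀ j : Fin n, 1 + ‖a j‖ ≤ B := by
    intro j
    have h1 : ‖a j‖ ≤ ∑ i : Fin n, ‖a i‖ :=
      Finset.single_le_sum (f := fun i : Fin n => ‖a i‖)
        (fun i _ => norm_nonneg _) (Finset.mem_univ j)
    rw [hBdef]; linarith
  set M : ℝ := B * (L * P + N * (L / 2)) with hMdef
  have hM0 : 0 ≤ M := by
    rw [hMdef]
    exact mul_nonneg hB0.le
      (add_nonneg (mul_nonneg hL0.le hP0) (mul_nonneg hN0 (by linarith)))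
  have hL2 : (0:ℝ) < L ^ 2 / 4 := by
    have := pow_pos hL0 2; linarith
  have hC0 : (0:ℝ) < 4 / L ^ 2 * M + 1 := by
    have h1 : 0 ≤ 4 / L ^ 2 := le_of_lt (by positivity)
    have h2 : 0 ≤ 4 / L ^ 2 * M := mul_nonneg h1 hM0
    linarith
  refine ⟨L / 2, by linarith, 4 / L ^ 2 * M + 1, hC0, ?_⟩
  intro F E ε hF hε hεδ j
  have hε0 : 0 ≤ ε := hε ▸ Real.sqrt_nonneg _
  -- each entry of E is bounded by ε
  have hE : ∀ idx, ‖E idx‖ ≤ ε := by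
    intro idx
    rw [← hε]
    have h1 : ‖E idx‖ ^ 2 ≤ ∑ i, ‖E i‖ ^ 2 :=
      Finset.single_le_sum (f := fun i => ‖E i‖ ^ 2)
        (fun i _ => sq_nonneg _) (Finset.mem_univ idx)
    calc ‖E idx‖ = Real.sqrt (‖E idx‖ ^ 2) := by
          rw [Real.sqrt_sq (norm_nonneg _)]
      _ ≤ _ := Real.sqrt_le_sqrt h1
  set p : (Fin m → Fin (n + 1)) → ℂ := fun γ => ∏ t, v (γ t) with hpdef
  have hcons : ∀ (i : Fin (n + 1)) (γ : Fin m → Fin (n + 1)),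
      (∏ t, v ((Fin.cons i γ : Fin (m + 1) → Fin (n + 1)) t)) = v i * ∏ t, v (γ t) := by
    intro i γ
    rw [Fin.prod_univ_succ]
    simp
  have hF0 : ∀ γ, F (Fin.cons 0 γ) = lam * p γ + E (Fin.cons 0 γ) := by
    intro γ
    rw [hF, hcons, hv0, hpdef, one_mul]
  have hFj : ∀ γ, F (Fin.cons j.succ γ) = lam * a j * p γ + E (Fin.cons j.succ γ) := by
    intro γ
    rw [hF, hcons, hva j, hpdef]
    ring_nf
  set D : ℝ := ∑ γ : Fin m → Fin (n + 1), ‖F (Fin.cons 0 γ)‖ ^ 2 with hDdef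
  -- lower bound for D
  have hDlb : L ^ 2 / 4 ≤ D := by
    have hp0 : p (fun _ => 0) = 1 := by simp [hpdef, hv0]
    have habs : L / 2 ≤ ‖F (Fin.cons 0 fun _ => 0)‖ := by
      rw [hF0, hp0, mul_one]
      have h1 := norm_add_le (lam + E (Fin.cons 0 fun _ => 0)) (-(E (Fin.cons 0 fun _ => 0)))
      simp only [add_neg_cancel_right, norm_neg] at h1
      have h2 := hE (Fin.cons 0 fun _ => 0)
      rw [hLdef] at *
      linarith
    have hsq : (L / 2) ^ 2 ≤ ‖F (Fin.cons 0 fun _ => 0)‖ ^ 2 :=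
      pow_le_pow_left₀ (by linarith) habs 2
    have hsum : ‖F (Fin.cons 0 fun _ => 0)‖ ^ 2 ≤ D := by
      rw [hDdef]
      exact Finset.single_le_sum
        (f := fun γ : Fin m → Fin (n + 1) => ‖F (Fin.cons 0 γ)‖ ^ 2)
        (fun γ _ => sq_nonneg _) (Finset.mem_univ _)
    calc L ^ 2 / 4 = (L / 2) ^ 2 := by ring
      _ ≤ _ := le_trans hsq hsum
  have hD0 : 0 < D := lt_of_lt_of_le hL2 hDlb
  have hDne : ((D : ℝ) : ℂ) ≠ 0 := Complex.ofReal_ne_zero.mpr (ne_of_gt hD0)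
  set Num : ℂ := ∑ γ : Fin m → Fin (n + 1),
      (starRingEnd ℂ) (F (Fin.cons 0 γ)) * F (Fin.cons j.succ γ) with hNum
  -- key identity
  have key : Num - a j * ((D : ℝ) : ℂ)
      = ∑ γ : Fin m → Fin (n + 1),
          (starRingEnd ℂ) (F (Fin.cons 0 γ)) *
            (E (Fin.cons j.succ γ) - a j * E (Fin.cons 0 γ)) := by
    have hDc : ((D : ℝ) : ℂ)
        = ∑ γ : Fin m → Fin (n + 1),
            (starRingEnd ℂ) (F (Fin.cons 0 γ)) * F (Fin.cons 0 γ) := by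
      rw [hDdef]
      push_cast
      refine Finset.sum_congr rfl fun γ _ => ?_
      rw [mul_comm, Complex.mul_conj, Complex.normSq_eq_norm_sq]
      norm_cast
    rw [hDc, hNum, Finset.mul_sum, ← Finset.sum_sub_distrib]
    refine Finset.sum_congr rfl fun γ _ => ?_
    have hdiff : F (Fin.cons j.succ γ) - a j * F (Fin.cons 0 γ)
        = E (Fin.cons j.succ γ) - a j * E (Fin.cons 0 γ) := by
      rw [hF0, hFj]; ring
    calc (starRingEnd ℂ) (F (Fin.cons 0 γ)) * F (Fin.cons j.succ γ)
          - a j * ((starRingEnd ℂ) (F (Fin.cons 0 γ)) * F (Fin.cons 0 γ))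
        = (starRingEnd ℂ) (F (Fin.cons 0 γ))
            * (F (Fin.cons j.succ γ) - a j * F (Fin.cons 0 γ)) := by ring
      _ = _ := by rw [hdiff]
  -- rewrite the goal
  have hgoal : Num / ((D : ℝ) : ℂ) - a j = (Num - a j * ((D : ℝ) : ℂ)) / ((D : ℝ) : ℂ) := by
    field_simp
  -- bound the numerator
  have hnum_bound : ‖Num - a j * ((D : ℝ) : ℂ)‖ ≤ M * ε := by
    rw [key]
    calc ‖∑ γ : Fin m → Fin (n + 1),
            (starRingEnd ℂ) (F (Fin.cons 0 γ)) *
              (E (Fin.cons j.succ γ) - a j * E (Fin.cons 0 γ))‖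
        ≤ ∑ γ : Fin m → Fin (n + 1),
            ‖(starRingEnd ℂ) (F (Fin.cons 0 γ)) *
              (E (Fin.cons j.succ γ) - a j * E (Fin.cons 0 γ))‖ :=
          norm_sum_le _ _
      _ ≤ ∑ γ : Fin m → Fin (n + 1),
            (L * ∏ t, ‖v (γ t)‖ + ε) * ((1 + ‖a j‖) * ε) := by
          refine Finset.sum_le_sum fun γ _ => ?_
          rw [norm_mul]
          have h1 : ‖(starRingEnd ℂ) (F (Fin.cons 0 γ))‖
              ≤ L * ∏ t, ‖v (γ t)‖ + ε := by
            rw [Complex.norm_conj, hF0]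
            calc ‖lam * p γ + E (Fin.cons 0 γ)‖
                ≤ ‖lam * p γ‖ + ‖E (Fin.cons 0 γ)‖ :=
                  norm_add_le _ _
              _ ≤ L * ∏ t, ‖v (γ t)‖ + ε := by
                  have heq : ‖lam * p γ‖ = L * ∏ t, ‖v (γ t)‖ := by
                    rw [norm_mul, hpdef, hLdef]
                    simp [norm_prod]
                  rw [heq]
                  exact add_le_add le_rfl (hE _)
          have h2 : ‖E (Fin.cons j.succ γ) - a j * E (Fin.cons 0 γ)‖
              ≤ (1 + ‖a j‖) * ε := by
            calc ‖E (Fin.cons j.succ γ) - a j * E (Fin.cons 0 γ)‖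
                ≤ ‖E (Fin.cons j.succ γ)‖ + ‖a j * E (Fin.cons 0 γ)‖ := by
                  rw [sub_eq_add_neg]
                  exact le_trans (norm_add_le _ _) (by rw [norm_neg])
              _ ≤ ε + ‖a j‖ * ε := by
                  rw [norm_mul]
                  exact add_le_add (hE _)
                    (mul_le_mul_of_nonneg_left (hE _) (norm_nonneg _))
              _ = (1 + ‖a j‖) * ε := by ring
          have hpos1 : 0 ≤ ‖(starRingEnd ℂ) (F (Fin.cons 0 γ))‖ :=
            norm_nonneg _
          exact mul_le_mul h1 h2 (norm_nonneg _) (le_trans hpos1 h1)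
      _ = (L * P + N * ε) * ((1 + ‖a j‖) * ε) := by
          rw [← Finset.sum_mul, Finset.sum_add_distrib, ← Finset.mul_sum, hPdef, hNdef]
          simp [mul_comm]
      _ ≤ (L * P + N * (L / 2)) * (B * ε) := by
          have h1 : L * P + N * ε ≤ L * P + N * (L / 2) := by
            have := mul_le_mul_of_nonneg_left hεδ hN0
            linarith
          have h2 : (1 + ‖a j‖) * ε ≤ B * ε :=
            mul_le_mul_of_nonneg_right (hBj j) hε0
          have h4 : 0 ≤ (1 + ‖a j‖) * ε :=
            mul_nonneg (by linarith [norm_nonneg (a j)]) hε0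
          exact mul_le_mul h1 h2 h4
            (add_nonneg (mul_nonneg hL0.le hP0) (mul_nonneg hN0 (by linarith)))
      _ = M * ε := by rw [hMdef]; ring
  rw [hgoal, norm_div]
  have habsD : ‖((D : ℝ) : ℂ)‖ = D := by
    rw [Complex.norm_real, Real.norm_eq_abs, abs_of_pos hD0]
  rw [habsD]
  calc ‖Num - a j * ((D : ℝ) : ℂ)‖ / D
      ≤ M * ε / (L ^ 2 / 4) := div_le_div₀ (mul_nonneg hM0 hε0) hnum_bound hL2 hDlb
    _ = 4 / L ^ 2 * M * ε := by field_simp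
    _ ≤ (4 / L ^ 2 * M + 1) * ε := by nlinarith
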